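/- Let p be an odd prime and q a variable. Then in Z_p[[q]], with t = q/(1+q)^2, F(t) := \sum_{k \ge 0} \binom{2k}{k} t^k, and t^\sigma := q^p/(1+q^p)^2, one has F(t) \equiv F_p(t) \cdot F(t^\sigma) mod p^2, where F_p(t) = \sum_{k=0}^{p-1} \binom{2k}{k} t^k. Equivalently, as formal power series in q, (1+q)(1-q^p) / ((1-q)(1+q^p)) \equiv \sum_{k=0}^{p-1} \binom{2k}{k} (q/(1+q)^2)^k mod p^2. -/

import Mathlib

open Finset


namespace Stmt14

open Polynomial

noncomputable section

/-- truncated central binomial sum, conjugated: `T p = (1+X)^(2p-2) * F_p(X/(1+X)^2)` -/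
def TT (p : ℕ) : ℤ[X] :=
  ∑ k ∈ Finset.range p, (Nat.centralBinom k : ℤ[X]) * X ^ k * (1 + X) ^ (2 * (p - 1 - k))

def PP (p : ℕ) : ℤ[X] := (1 + X) ^ (2 * p - 1) * (1 - X ^ p)
def QQ (p : ℕ) : ℤ[X] := (1 - X) * (1 + X ^ p) * TT p
def NN (p : ℕ) : ℤ[X] := PP p - QQ p
def DD (p : ℕ) : ℤ[X] := (1 - X) * (1 + X ^ p) * (1 + X) ^ (2 * p - 2)

/-- helper: `(1+X) * d/dX (1+X)^k = k (1+X)^k` -/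
lemma one_add_X_mul_derivative_pow (R : Type*) [CommRing R] (k : ℕ) :
    (1 + X : R[X]) * derivative ((1 + X : R[X]) ^ k) = (k : R[X]) * (1 + X) ^ k := by
  cases k with
  | zero => simp
  | succ m =>
    rw [derivative_pow]
    simp only [Nat.add_sub_cancel, derivative_add, derivative_one, derivative_X, zero_add,
      mul_one, map_add, map_one, map_natCast]
    push_cast
    ring

lemma TT_succ (n : ℕ) (hn : 1 ≤ n) :
    TT (n + 1) = (1 + X) ^ 2 * TT n + (Nat.centralBinom n : ℤ[X]) * X ^ n := by
  unfold TT
  rw [Finset.sum_range_succ, Finset.mul_sum]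
  congr 1
  · apply Finset.sum_congr rfl
    intro k hk
    have hk' : k < n := Finset.mem_range.mp hk
    have h1 : 2 * (n + 1 - 1 - k) = 2 * (n - 1 - k) + 2 := by omega
    rw [h1, pow_add]
    ring
  · have h2 : 2 * (n + 1 - 1 - n) = 0 := by omega
    rw [h2, pow_zero, mul_one]

/-- the exact ODE satisfied by the truncated sum -/
lemma ode_TT (n : ℕ) (hn : 1 ≤ n) :
    (1 - X ^ 2) * derivative (TT n)
      = (2 * (n : ℤ[X]) - 2) * (1 - X) * TT n + 2 * TT n
        - (n : ℤ[X]) * (Nat.centralBinom n : ℤ[X]) * X ^ (n - 1) := by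
  induction n, hn using Nat.le_induction with
  | base =>
    have h1 : TT 1 = 1 := by
      simp [TT, Nat.centralBinom_zero]
    rw [h1, show Nat.centralBinom 1 = 2 from rfl]
    simp only [derivative_one, mul_zero]
    push_cast
    ring
  | succ n hn ih =>
    have hx : (X : ℤ[X]) ^ n = X ^ (n - 1) * X := by
      rw [← pow_succ]
      congr 1
      omega
    have hrec : ((n : ℤ[X]) + 1) * (Nat.centralBinom (n + 1) : ℤ[X])
        = (2 * (2 * (n : ℤ[X]) + 1)) * (Nat.centralBinom n : ℤ[X]) := by
      have := Nat.succ_mul_centralBinom_succ n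
      have h2 : (((n + 1) * Nat.centralBinom (n + 1) : ℕ) : ℤ[X])
          = ((2 * (2 * n + 1) * Nat.centralBinom n : ℕ) : ℤ[X]) := by rw [this]
      push_cast at h2
      linear_combination h2
    rw [TT_succ n hn]
    rw [derivative_add, derivative_mul, derivative_mul, derivative_pow]
    simp only [derivative_add, derivative_one, derivative_X, zero_add, mul_one,
      derivative_X_pow, derivative_natCast, zero_mul, map_natCast]
    norm_num
    push_cast
    rw [hx]
    linear_combination ((1 + X : ℤ[X]) ^ 2) * ih + (X ^ (n - 1) * X) * hrec

/-- The master exact differential identity over `ℤ[X]`. -/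
lemma main_identity (m : ℕ) (hm : 1 ≤ m) :
    (1 + X : ℤ[X]) ^ 2 * (1 - X) ^ 2
        * (derivative (NN (m+1)) * DD (m+1) - NN (m+1) * derivative (DD (m+1)))
      = (1 + X) * (1 - X) * (2 * NN (m+1) * DD (m+1)
          - ((m : ℤ[X]) + 1) * X ^ m * (1 - X) ^ 2
            * (2 * (1 + X) ^ (4*m+2)
                - (Nat.centralBinom (m+1) : ℤ[X]) * (1 + X ^ (m+1)) ^ 2 * (1 + X) ^ (2*m))) := by
  have hT := ode_TT (m+1) (by omega)
  rw [Nat.add_sub_cancel] at hT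
  push_cast at hT
  have h1 := one_add_X_mul_derivative_pow ℤ (2*m+1)
  have h2 := one_add_X_mul_derivative_pow ℤ (2*m)
  push_cast at h1 h2
  unfold NN PP QQ DD
  rw [show 2*(m+1)-1 = 2*m+1 from by omega, show 2*(m+1)-2 = 2*m from by omega]
  simp only [derivative_sub, derivative_add, derivative_mul, derivative_one, derivative_X,
    derivative_X_pow, Nat.add_sub_cancel, map_natCast, zero_add, zero_mul, mul_one, one_mul,
    add_zero, zero_sub, sub_zero]
  push_cast
  linear_combination
      ((1+X:ℤ[X])*(1-X)^2*(1-X^(m+1))*((1-X)*(1+X^(m+1))*(1+X)^(2*m))) * h1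
    - ((1+X:ℤ[X])*(1-X)^3*(1+X^(m+1))*((1+X)^(2*m+1)*(1-X^(m+1)) - (1-X)*(1+X^(m+1))*(TT (m+1)))) * h2
    - ((1+X:ℤ[X])*(1-X)^2*(1+X^(m+1))*((1-X)*(1+X^(m+1))*(1+X)^(2*m))) * hT

/-- cancellation: from the homogeneous mapped identity to the first order ODE -/
lemma cancel (p m : ℕ) [hp : Fact p.Prime] (hpm : p = m + 1) (W : (ZMod p)[X])
    (hmain : (1+X:(ZMod p)[X])^2 * (1-X)^2
        * (derivative W * ((1-X)*(1+X^p)*(1+X)^(2*m))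
            - W * derivative ((1-X)*(1+X^p)*(1+X)^(2*m)))
      = (1+X) * (1-X) * (2 * W * ((1-X)*(1+X^p)*(1+X)^(2*m)))) :
    (1+X:(ZMod p)[X]) * derivative W + W = 0 := by
  have hfrob : (1 + X^p : (ZMod p)[X]) = (1+X)^p := by
    rw [add_pow_char]; simp
  rw [hfrob] at hmain
  rw [show ((1-X:(ZMod p)[X])*(1+X)^p*(1+X)^(2*m)) = (1-X)*(1+X)^(3*m+1) from by
    rw [mul_assoc, ← pow_add]; congr 2; omega] at hmain
  have h0 : ((p : ℕ) : (ZMod p)[X]) = 0 := by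
    rw [← map_natCast (C : ZMod p →+* _) p, ZMod.natCast_self, map_zero]
  have hmp : ((m:ℕ) : (ZMod p)[X]) = -1 := by
    have h1 : (((m+1) :ℕ) : (ZMod p)[X]) = 0 := by rw [← hpm]; exact h0
    push_cast at h1
    linear_combination h1
  have hd : (1+X:(ZMod p)[X]) * derivative ((1-X)*(1+X)^(3*m+1))
      = -(1+X)^(3*m+2) + (-2:(ZMod p)[X])*(1-X)*(1+X)^(3*m+1) := by
    rw [derivative_mul]
    simp only [derivative_sub, derivative_one, derivative_X, zero_sub]
    have h3 : ((3*m+1 : ℕ) : (ZMod p)[X]) = -2 := by push_cast [hmp]; ring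
    linear_combination (1-X:(ZMod p)[X]) * one_add_X_mul_derivative_pow (ZMod p) (3*m+1)
      + (1-X)*(1+X)^(3*m+1) * h3
  have key : ((1+X:(ZMod p)[X])^(3*m+3)*(1-X)^3) * ((1+X)*derivative W + W) = 0 := by
    linear_combination (1+X:(ZMod p)[X]) * hmain + (1+X)^2*(1-X)^2*W * hd
  have hA : (1+X:(ZMod p)[X]) ≠ 0 := fun h => by
    simpa using congrArg (fun f => Polynomial.coeff f 0) h
  have hB : (1-X:(ZMod p)[X]) ≠ 0 := fun h => by
    simpa using congrArg (fun f => Polynomial.coeff f 0) h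
  exact (mul_eq_zero.mp key).resolve_left (mul_ne_zero (pow_ne_zero _ hA) (pow_ne_zero _ hB))

/-- core: solutions of `(1+X) W' + W = 0` with the right anchors vanish -/
lemma core (p : ℕ) [hp : Fact p.Prime] (hodd : Odd p) (W : (ZMod p)[X])
    (hode : (1+X:(ZMod p)[X]) * derivative W + W = 0)
    (hdeg : ∀ i, 3*p ≤ i → W.coeff i = 0)
    (h0 : W.coeff 0 = 0) (hev : W.eval 1 = 0) (hpp : W.coeff p = W.coeff (2*p)) :
    ∀ i, W.coeff i = 0 := by
  have hppos : 0 < p := hp.out.pos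
  rw [add_mul, one_mul] at hode
  have hco : ∀ i : ℕ, ((i:ZMod p) + 1) * (W.coeff (i+1) + W.coeff i) = 0 := by
    intro i
    have h := congrArg (fun f => Polynomial.coeff f i) hode
    simp only [coeff_add, coeff_zero] at h
    cases i with
    | zero =>
      rw [Polynomial.mul_coeff_zero, Polynomial.coeff_X_zero, zero_mul,
        Polynomial.coeff_derivative] at h
      push_cast at h ⊢
      linear_combination h
    | succ j =>
      rw [Polynomial.coeff_X_mul, Polynomial.coeff_derivative, Polynomial.coeff_derivative] at h
      push_cast at h ⊢
      linear_combination h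
  have hstep : ∀ i : ℕ, ¬ ((p:ℕ) ∣ (i+1)) → W.coeff (i+1) = - W.coeff i := by
    intro i hnd
    have h2 : ((i:ZMod p)+1) ≠ 0 := by
      have h3 : (((i+1):ℕ) : ZMod p) ≠ 0 := by
        rw [Ne, ZMod.natCast_eq_zero_iff]; exact hnd
      push_cast at h3; exact h3
    have h4 := (mul_eq_zero.mp (hco i)).resolve_left h2
    exact eq_neg_of_add_eq_zero_left h4
  have hblock : ∀ j r, r < p → W.coeff (j*p + r) = (-1)^r * W.coeff (j*p) := by
    intro j r
    induction r with
    | zero => intro _; simp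
    | succ s ih =>
      intro hs
      have hnd : ¬ ((p:ℕ) ∣ (j*p + s + 1)) := by
        intro hdvd
        have h5 : (p:ℕ) ∣ (s + 1) := by
          have := (Nat.dvd_add_right (dvd_mul_left p j)).mp
            (by rwa [show j*p + s + 1 = j*p + (s+1) from by omega] at hdvd)
          exact this
        have := Nat.le_of_dvd (by omega) h5
        omega
      rw [show j*p + (s+1) = (j*p + s) + 1 from rfl, hstep _ hnd, ih (by omega)]
      ring
  have h2ne : (2 : ZMod p) ≠ 0 := by
    have hnd : ¬ ((p:ℕ) ∣ 2) := by
      intro h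
      have := (Nat.prime_dvd_prime_iff_eq hp.out Nat.prime_two).mp h
      rw [this] at hodd
      simp [Nat.odd_iff] at hodd
    rw [show (2:ZMod p) = ((2:ℕ):ZMod p) from by push_cast; ring, Ne,
      ZMod.natCast_eq_zero_iff]
    exact hnd
  have hdlt : W.natDegree < 3*p := by
    by_cases hW0 : W = 0
    · rw [hW0, Polynomial.natDegree_zero]; omega
    · by_contra hge
      push_neg at hge
      have h8 := hdeg _ hge
      rw [show W.coeff W.natDegree = W.leadingCoeff from rfl] at h8
      exact hW0 (Polynomial.leadingCoeff_eq_zero.mp h8)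
  have hsum : ∑ i ∈ Finset.range (3*p), W.coeff i = 0 := by
    have h6 := (Polynomial.eval_eq_sum_range' hdlt (1 : ZMod p)).symm.trans hev
    simpa using h6
  have hb : ∀ j, ∑ r ∈ Finset.range p, W.coeff (j*p + r) = W.coeff (j*p) := by
    intro j
    rw [Finset.sum_congr rfl (fun r hr => hblock j r (Finset.mem_range.mp hr)),
      ← Finset.sum_mul, neg_one_geom_sum, if_neg (Nat.not_even_iff_odd.mpr hodd), one_mul]
  have hsplit : ∑ i ∈ Finset.range (3*p), W.coeff i
      = W.coeff 0 + W.coeff p + W.coeff (2*p) := by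
    rw [Finset.range_eq_Ico,
      ← Finset.sum_Ico_consecutive (fun i => W.coeff i) (by omega : 0 ≤ 2*p) (by omega : 2*p ≤ 3*p),
      ← Finset.sum_Ico_consecutive (fun i => W.coeff i) (by omega : 0 ≤ p) (by omega : p ≤ 2*p)]
    have e0 : ∑ i ∈ Finset.Ico 0 p, W.coeff i = W.coeff 0 := by
      rw [Finset.sum_Ico_eq_sum_range]
      simpa using hb 0
    have e1 : ∑ i ∈ Finset.Ico p (2*p), W.coeff i = W.coeff p := by
      rw [Finset.sum_Ico_eq_sum_range, show 2*p - p = p from by omega]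
      have := hb 1
      simp only [one_mul] at this
      simpa using this
    have e2 : ∑ i ∈ Finset.Ico (2*p) (3*p), W.coeff i = W.coeff (2*p) := by
      rw [Finset.sum_Ico_eq_sum_range, show 3*p - 2*p = p from by omega]
      exact hb 2
    rw [e0, e1, e2]
  have hWp : W.coeff p = 0 := by
    have h7 : (2:ZMod p) * W.coeff p = 0 := by
      rw [hsplit, h0, ← hpp] at hsum
      linear_combination hsum
    exact (mul_eq_zero.mp h7).resolve_left h2ne
  intro i
  rcases le_or_gt (3*p) i with h|h
  · exact hdeg i h
  · have hi : i = (i / p) * p + i % p := by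
      rw [mul_comm]
      exact (Nat.div_add_mod i p).symm
    have hr : i % p < p := Nat.mod_lt _ hppos
    have hj : i / p < 3 := by
      rw [Nat.div_lt_iff_lt_mul hppos]
      omega
    rw [hi, hblock _ _ hr]
    have h9 : i / p = 0 ∨ i / p = 1 ∨ i / p = 2 := by
      revert hj; generalize i / p = q; intro hj; omega
    rcases h9 with h9|h9|h9 <;> rw [h9]
    · simp [h0]
    · rw [one_mul, hWp, mul_zero]
    · rw [← hpp, hWp, mul_zero]
lemma natDegree_one_add_X_pow_le (k : ℕ) : ((1+X:ℤ[X])^k).natDegree ≤ k := by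
  have h : (1+X:ℤ[X]).natDegree = 1 := by
    rw [add_comm, ← Polynomial.C_1, Polynomial.natDegree_X_add_C]
  calc ((1+X:ℤ[X])^k).natDegree ≤ k * (1+X:ℤ[X]).natDegree := Polynomial.natDegree_pow_le
    _ ≤ k := by rw [h]; omega

lemma natDegree_TT_le (p : ℕ) (hp : 1 ≤ p) : (TT p).natDegree ≤ 2*p - 2 := by
  apply Polynomial.natDegree_sum_le_of_forall_le
  intro k hk
  have hk' : k < p := Finset.mem_range.mp hk
  calc ((Nat.centralBinom k : ℤ[X]) * X ^ k * (1 + X) ^ (2 * (p - 1 - k))).natDegree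
      ≤ ((Nat.centralBinom k : ℤ[X]) * X ^ k).natDegree
          + ((1 + X : ℤ[X]) ^ (2 * (p - 1 - k))).natDegree := Polynomial.natDegree_mul_le
    _ ≤ ((Nat.centralBinom k : ℤ[X])).natDegree + ((X : ℤ[X]) ^ k).natDegree
          + (2 * (p - 1 - k)) * (1 + X : ℤ[X]).natDegree :=
        add_le_add Polynomial.natDegree_mul_le Polynomial.natDegree_pow_le
    _ ≤ 0 + k + (2 * (p - 1 - k)) * 1 := by
        refine add_le_add (add_le_add ?_ ?_) ?_
        · exact le_of_eq (Polynomial.natDegree_natCast _)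
        · exact le_of_eq (Polynomial.natDegree_X_pow _)
        · refine Nat.mul_le_mul le_rfl ?_
          rw [add_comm, ← Polynomial.C_1, Polynomial.natDegree_X_add_C]
    _ ≤ 2*p - 2 := by omega

lemma coeff_TT_eq_zero (p : ℕ) (hp : 1 ≤ p) (i : ℕ) (hi : 2*p - 1 ≤ i) :
    (TT p).coeff i = 0 :=
  Polynomial.coeff_eq_zero_of_natDegree_lt (lt_of_le_of_lt (natDegree_TT_le p hp) (by omega))

lemma coeff_NN_eq_zero (p : ℕ) (hp : 1 ≤ p) : ∀ i, 3*p ≤ i → (NN p).coeff i = 0 := by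
  intro i hi
  apply Polynomial.coeff_eq_zero_of_natDegree_lt
  apply lt_of_le_of_lt _ (show 3*p - 1 < i from by omega)
  unfold NN PP QQ
  apply le_trans (Polynomial.natDegree_sub_le _ _)
  apply max_le
  · have h1 := natDegree_one_add_X_pow_le (2*p-1)
    have h2 : ((1:ℤ[X]) - X^p).natDegree ≤ p :=
      le_trans (Polynomial.natDegree_sub_le _ _) (by simp)
    have h4 := Polynomial.natDegree_mul_le (p := (1+X:ℤ[X])^(2*p-1)) (q := 1 - X^p)
    omega
  · have h1 : ((1:ℤ[X]) - X).natDegree ≤ 1 :=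
      le_trans (Polynomial.natDegree_sub_le _ _) (by simp)
    have h2 : ((1:ℤ[X]) + X^p).natDegree ≤ p :=
      le_trans (Polynomial.natDegree_add_le _ _) (by simp)
    have h3 := natDegree_TT_le p hp
    have h4 := Polynomial.natDegree_mul_le (p := (1:ℤ[X]) - X) (q := 1 + X^p)
    have h5 := Polynomial.natDegree_mul_le (p := ((1:ℤ[X]) - X) * (1 + X^p)) (q := TT p)
    omega

lemma TT_eval_zero (p : ℕ) (hp : 1 ≤ p) : (TT p).eval 0 = 1 := by
  unfold TT
  rw [Polynomial.eval_finset_sum, Finset.sum_eq_single 0]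
  · simp
  · intro k _ hk0
    simp [zero_pow hk0]
  · intro h
    exact absurd (Finset.mem_range.mpr (by omega)) h

lemma NN_coeff_zero (p : ℕ) (hp : 1 ≤ p) : (NN p).coeff 0 = 0 := by
  rw [Polynomial.coeff_zero_eq_eval_zero]
  unfold NN PP QQ
  simp [TT_eval_zero p hp, zero_pow (by omega : p ≠ 0)]

lemma NN_eval_one (p : ℕ) (hp : 1 ≤ p) : (NN p).eval 1 = 0 := by
  unfold NN PP QQ
  simp

lemma two_mul_choose (p : ℕ) (hp : 1 ≤ p) :
    Nat.centralBinom p = 2 * ((2*p-1).choose p) := by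
  obtain ⟨q, rfl⟩ : ∃ q, p = q+1 := ⟨p-1, by omega⟩
  rw [Nat.centralBinom_eq_two_mul_choose, show 2*(q+1) = (2*q+1)+1 from by omega,
    Nat.choose_succ_succ, show (2*q+1)+1-1 = 2*q+1 from by omega]
  have h1 : (2*q+1).choose q = (2*q+1).choose (q+1) := by
    rw [← Nat.choose_symm (by omega : q+1 ≤ 2*q+1), show 2*q+1 - (q+1) = q from by omega]
  simp only [Nat.succ_eq_add_one]
  omega

lemma NN_coeff_sub (p : ℕ) (hp : 1 ≤ p) :
    (NN p).coeff p - (NN p).coeff (2*p) = (Nat.centralBinom p : ℤ) - 2 := by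
  have hPP : PP p = (1+X)^(2*p-1) - (1+X)^(2*p-1) * X^p := by rw [PP]; ring
  have hQQ : QQ p = TT p + TT p * X^p - TT p * X^1 - TT p * X^(p+1) := by rw [QQ]; ring
  have hTT0 : (TT p).coeff 0 = 1 := by
    rw [Polynomial.coeff_zero_eq_eval_zero]; exact TT_eval_zero p hp
  have hz1 : (TT p).coeff (2*p) = 0 := coeff_TT_eq_zero p hp _ (by omega)
  have hz2 : (TT p).coeff (2*p-1) = 0 := coeff_TT_eq_zero p hp _ (by omega)
  unfold NN
  rw [hPP, hQQ]
  simp only [Polynomial.coeff_sub, Polynomial.coeff_add, Polynomial.coeff_mul_X_pow',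
    Polynomial.coeff_one_add_X_pow]
  simp only [if_pos (le_rfl : p ≤ p), if_pos hp, if_neg (show ¬ p+1 ≤ p from by omega),
    if_pos (show p ≤ 2*p from by omega), if_pos (show (1:ℕ) ≤ 2*p from by omega),
    if_pos (show p+1 ≤ 2*p from by omega)]
  simp only [show p - p = 0 from by omega, show 2*p - p = p from by omega,
    show 2*p - (p+1) = p - 1 from by omega, show 2*p - 1 = 2*p - 1 from rfl]
  rw [hTT0, hz1, hz2, Nat.choose_eq_zero_of_lt (by omega : 2*p-1 < 2*p),
    Nat.choose_zero_right]
  have hcb : (Nat.centralBinom p : ℤ) = 2 * ((2*p-1).choose p : ℤ) := by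
    exact_mod_cast congrArg (Nat.cast : ℕ → ℤ) (two_mul_choose p hp)
  push_cast
  linarith [hcb]

lemma babbage (p : ℕ) [hp : Fact p.Prime] : ((p:ℤ))^2 ∣ (Nat.centralBinom p : ℤ) - 2 := by
  have hppos : 0 < p := hp.out.pos
  have hv : ((p:ℕ) + p).choose p = ∑ i ∈ Finset.range (p+1), p.choose i * p.choose (p - i) := by
    rw [Nat.add_choose_eq,
      Finset.Nat.sum_antidiagonal_eq_sum_range_succ (fun x y => p.choose x * p.choose y)]
  obtain ⟨q, hq⟩ : ∃ q, p = q+1 := ⟨p-1, by omega⟩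
  have hcb : Nat.centralBinom p = ((p:ℕ) + p).choose p := by
    rw [Nat.centralBinom_eq_two_mul_choose, two_mul]
  rw [hv] at hcb
  rw [hq, Finset.sum_range_succ, Finset.sum_range_succ'] at hcb
  rw [← hq] at hcb
  have hfirst : p.choose 0 * p.choose (p - 0) = 1 := by simp
  have hlast : p.choose p * p.choose (p - p) = 1 := by simp
  rw [hfirst, hlast] at hcb
  have : (Nat.centralBinom p : ℤ) - 2
      = ∑ i ∈ Finset.range q, (p.choose (i+1) : ℤ) * (p.choose (p - (i+1)) : ℤ) := by
    rw [hcb]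
    push_cast
    ring
  rw [this]
  apply Finset.dvd_sum
  intro i hi
  have hi' : i < q := Finset.mem_range.mp hi
  have hd1 : (p:ℤ) ∣ (p.choose (i+1) : ℤ) := by
    exact_mod_cast Int.natCast_dvd_natCast.mpr
      (Nat.Prime.dvd_choose_self hp.out (by omega) (by omega))
  have hd2 : (p:ℤ) ∣ (p.choose (p - (i+1)) : ℤ) := by
    exact_mod_cast Int.natCast_dvd_natCast.mpr
      (Nat.Prime.dvd_choose_self hp.out (by omega) (by omega))
  rw [sq]
  exact mul_dvd_mul hd1 hd2

/-- level 1: all coefficients of `NN p` are divisible by `p` -/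
lemma lvl1 (m : ℕ) [hp : Fact (m+1).Prime] (hm : 1 ≤ m) (hodd : Odd (m+1)) :
    ∀ i, ((m+1:ℕ):ℤ) ∣ (NN (m+1)).coeff i := by
  have hb2 : ((m+1:ℕ):ℤ) ∣ (Nat.centralBinom (m+1) : ℤ) - 2 :=
    dvd_trans (dvd_pow_self _ two_ne_zero) (babbage (m+1))
  set φ := Int.castRingHom (ZMod (m+1)) with hφ
  set Wb := (NN (m+1)).map φ with hWb
  suffices h : ∀ i, Wb.coeff i = 0 by
    intro i
    have h2 := h i
    rw [hWb, Polynomial.coeff_map] at h2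
    exact_mod_cast (ZMod.intCast_zmod_eq_zero_iff_dvd _ _).mp h2
  have hDb : (DD (m+1)).map φ
      = ((1:(ZMod (m+1))[X]) - X) * (1 + X^(m+1)) * (1+X)^(2*m) := by
    unfold DD
    rw [show 2*(m+1)-2 = 2*m from by omega]
    simp only [Polynomial.map_mul, Polynomial.map_sub, Polynomial.map_add, Polynomial.map_pow,
      Polynomial.map_one, Polynomial.map_X]
  have h0 : ((m:(ZMod (m+1))[X]) + 1) = 0 := by
    have h1 : (((m+1):ℕ) : (ZMod (m+1))[X]) = 0 := by
      rw [← map_natCast (Polynomial.C : ZMod (m+1) →+* _) (m+1), ZMod.natCast_self, map_zero]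
    push_cast at h1
    linear_combination h1
  apply core (m+1) hodd
  · -- the ODE
    have H := congrArg (Polynomial.map φ) (main_identity m hm)
    simp only [Polynomial.map_mul, Polynomial.map_sub, Polynomial.map_add, Polynomial.map_pow,
      Polynomial.map_one, Polynomial.map_X, Polynomial.map_ofNat, Polynomial.map_natCast,
      ← Polynomial.derivative_map, hDb, ← hWb] at H
    apply cancel (m+1) m rfl
    linear_combination H - (1+X:(ZMod (m+1))[X])*(1-X)
      * (X^m*(1-X)^2*(2*(1+X)^(4*m+2)
          - (Nat.centralBinom (m+1) : (ZMod (m+1))[X])*(1+X^(m+1))^2*(1+X)^(2*m))) * h0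
  · intro i hi
    rw [hWb, Polynomial.coeff_map, coeff_NN_eq_zero (m+1) (by omega) i hi, map_zero]
  · rw [hWb, Polynomial.coeff_map, NN_coeff_zero (m+1) (by omega), map_zero]
  · rw [hWb, Polynomial.eval_one_map, NN_eval_one (m+1) (by omega), map_zero]
  · have h3 : Wb.coeff (m+1) - Wb.coeff (2*(m+1)) = 0 := by
      rw [hWb, Polynomial.coeff_map, Polynomial.coeff_map, ← map_sub, NN_coeff_sub (m+1) (by omega)]
      exact (ZMod.intCast_zmod_eq_zero_iff_dvd _ _).mpr hb2
    exact sub_eq_zero.mp h3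

/-- level 2: all coefficients of `NN p` are divisible by `p^2` -/
lemma lvl2 (m : ℕ) [hp : Fact (m+1).Prime] (hm : 1 ≤ m) (hodd : Odd (m+1)) :
    ∀ i, ((m+1:ℕ):ℤ)^2 ∣ (NN (m+1)).coeff i := by
  have hpne : ((m+1:ℕ):ℤ) ≠ 0 := by exact_mod_cast Nat.succ_ne_zero m
  have h1 := lvl1 m hm hodd
  set M : ℤ[X] := ⟨⟨(NN (m+1)).toFinsupp.coeff.mapRange (· / ((m+1:ℕ):ℤ)) (by simp)⟩⟩ with hM
  have hMcoeff : ∀ i, M.coeff i = (NN (m+1)).coeff i / ((m+1:ℕ):ℤ) := by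
    intro i
    rw [hM]
    simp [Polynomial.coeff, Finsupp.mapRange_apply]
  have hNM : NN (m+1) = Polynomial.C ((m+1:ℕ):ℤ) * M := by
    ext i
    rw [Polynomial.coeff_C_mul, hMcoeff]
    exact (Int.mul_ediv_cancel' (h1 i)).symm
  suffices h : ∀ i, ((m+1:ℕ):ℤ) ∣ M.coeff i by
    intro i
    have h2 := h i
    rw [hNM, Polynomial.coeff_C_mul, sq]
    exact mul_dvd_mul_left _ h2
  -- exact identity for M
  have hC : ((m:ℤ[X])+1) = Polynomial.C ((m+1:ℕ):ℤ) := by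
    rw [map_natCast]
    push_cast
    ring
  have hCne : (Polynomial.C ((m+1:ℕ):ℤ)) ≠ 0 := fun hcon => hpne (by
    have := congrArg (fun f => Polynomial.coeff f 0) hcon
    simpa using this)
  have hMmain : (1+X:ℤ[X])^2*(1-X)^2*(derivative M * DD (m+1) - M * derivative (DD (m+1)))
      = (1+X)*(1-X)*(2*M*DD (m+1) - X^m*(1-X)^2*(2*(1+X)^(4*m+2)
          - (Nat.centralBinom (m+1) : ℤ[X])*(1+X^(m+1))^2*(1+X)^(2*m))) := by
    have H := main_identity m hm
    rw [hNM, Polynomial.derivative_C_mul] at H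
    apply mul_left_cancel₀ hCne
    linear_combination H - ((1+X:ℤ[X])*(1-X)
      *(X^m*(1-X)^2*(2*(1+X)^(4*m+2)
          - (Nat.centralBinom (m+1) : ℤ[X])*(1+X^(m+1))^2*(1+X)^(2*m)))) * hC
  -- reduce mod p
  have hb2full := babbage (m+1)
  have hb2 : ((m+1:ℕ):ℤ) ∣ (Nat.centralBinom (m+1) : ℤ) - 2 :=
    dvd_trans (dvd_pow_self _ two_ne_zero) hb2full
  set φ := Int.castRingHom (ZMod (m+1)) with hφ
  set Mb := M.map φ with hMb
  suffices h : ∀ i, Mb.coeff i = 0 by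
    intro i
    have h2 := h i
    rw [hMb, Polynomial.coeff_map] at h2
    exact_mod_cast (ZMod.intCast_zmod_eq_zero_iff_dvd _ _).mp h2
  have hDb : (DD (m+1)).map φ
      = ((1:(ZMod (m+1))[X]) - X) * (1 + X^(m+1)) * (1+X)^(2*m) := by
    unfold DD
    rw [show 2*(m+1)-2 = 2*m from by omega]
    simp only [Polynomial.map_mul, Polynomial.map_sub, Polynomial.map_add, Polynomial.map_pow,
      Polynomial.map_one, Polynomial.map_X]
  have hcbP : ((Nat.centralBinom (m+1) : (ZMod (m+1))[X])) = 2 := by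
    have h3 : (((Nat.centralBinom (m+1) : ℤ) - 2 : ℤ) : ZMod (m+1)) = 0 :=
      (ZMod.intCast_zmod_eq_zero_iff_dvd _ _).mpr hb2
    push_cast at h3
    have h4 : ((Nat.centralBinom (m+1) : ZMod (m+1))) = 2 := by linear_combination h3
    rw [← map_natCast (Polynomial.C : ZMod (m+1) →+* _) (Nat.centralBinom (m+1)), h4]
    exact map_ofNat (Polynomial.C : ZMod (m+1) →+* _) 2
  have hfr : (1 + X^(m+1) : (ZMod (m+1))[X]) = (1+X)^(m+1) := by
    rw [add_pow_char]
    simp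
  have hG : ((X:(ZMod (m+1))[X])^m*(1-X)^2*(2*(1+X)^(4*m+2)
      - 2*(1+X^(m+1))^2*(1+X)^(2*m))) = 0 := by
    rw [hfr]
    ring
  apply core (m+1) hodd
  · have H := congrArg (Polynomial.map φ) hMmain
    simp only [Polynomial.map_mul, Polynomial.map_sub, Polynomial.map_add, Polynomial.map_pow,
      Polynomial.map_one, Polynomial.map_X, Polynomial.map_ofNat, Polynomial.map_natCast,
      ← Polynomial.derivative_map, hDb, ← hMb] at H
    rw [hcbP] at H
    apply cancel (m+1) m rfl
    linear_combination H - ((1+X:(ZMod (m+1))[X])*(1-X)) * hG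
  · intro i hi
    rw [hMb, Polynomial.coeff_map, hMcoeff, coeff_NN_eq_zero (m+1) (by omega) i hi]
    simp
  · rw [hMb, Polynomial.coeff_map, hMcoeff, NN_coeff_zero (m+1) (by omega)]
    simp
  · have h5 : ((m+1:ℕ):ℤ) * M.eval 1 = 0 := by
      have h5a := NN_eval_one (m+1) (by omega)
      rw [hNM] at h5a
      simpa using h5a
    have h6 : M.eval 1 = 0 := by
      rcases mul_eq_zero.mp h5 with h|h
      · exact absurd h hpne
      · exact h
    rw [hMb, Polynomial.eval_one_map, h6, map_zero]
  · have h7 : ((m+1:ℕ):ℤ) * (M.coeff (m+1) - M.coeff (2*(m+1)))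
        = (Nat.centralBinom (m+1) : ℤ) - 2 := by
      rw [← NN_coeff_sub (m+1) (by omega), hNM, Polynomial.coeff_C_mul, Polynomial.coeff_C_mul]
      ring
    obtain ⟨k, hk⟩ := hb2full
    have h8 : M.coeff (m+1) - M.coeff (2*(m+1)) = ((m+1:ℕ):ℤ) * k := by
      apply mul_left_cancel₀ hpne
      rw [h7, hk]
      ring
    have h10 : Mb.coeff (m+1) - Mb.coeff (2*(m+1)) = 0 := by
      rw [hMb, Polynomial.coeff_map, Polynomial.coeff_map, ← map_sub, h8]
      simp [hφ]
    exact sub_eq_zero.mp h10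

end

end Stmt14


open Finset PowerSeries

/-- Functional supercongruence for central binomial coefficients: as formal power series
over `ℤ_[p]`, with `t = q/(1+q)²` and `t^σ = q^p/(1+q^p)²`,
`F(t) ≡ F_p(t) F(t^σ) mod p²`; equivalently
`(1+q)(1-q^p)/((1-q)(1+q^p)) ≡ ∑_{k<p} binom(2k,k) (q/(1+q)²)^k mod p²`,
i.e. all coefficients of the difference are divisible by `p²`. -/
theorem stmt_14 (p : ℕ) [Fact p.Prime] (hodd : Odd p) (n : ℕ) :
    (p : ℤ_[p]) ^ 2 ∣
      PowerSeries.coeff (R := ℤ_[p]) n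
        ((1 + X) * (1 - X ^ p) *
            Ring.inverse ((1 - X) * (1 + (X : PowerSeries ℤ_[p]) ^ p))
          - ∑ k ∈ Finset.range p,
              (Nat.choose (2 * k) k : ℤ_[p]) •
                (X * Ring.inverse ((1 + (X : PowerSeries ℤ_[p])) ^ 2)) ^ k) := by
  obtain ⟨m, rfl⟩ : ∃ m, p = m + 1 := ⟨p - 1, by
    have := (Fact.out : p.Prime).two_le; omega⟩
  have hm : 1 ≤ m := by have := (Fact.out : (m+1).Prime).two_le; omega
  have hdvd := Stmt14.lvl2 m hm hodd
  set ρ : Polynomial ℤ →+* PowerSeries ℤ_[m+1] :=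
    (Polynomial.coeToPowerSeries.ringHom :
        Polynomial ℤ_[m+1] →+* PowerSeries ℤ_[m+1]).comp
      (Polynomial.mapRingHom (Int.castRingHom ℤ_[m+1])) with hρ
  have hρX : ρ Polynomial.X = (X : PowerSeries ℤ_[m+1]) := by
    simp [hρ, Polynomial.coeToPowerSeries.ringHom_apply]
  have hu3 : IsUnit ((1 + X : PowerSeries ℤ_[m+1])) := by
    rw [PowerSeries.isUnit_iff_constantCoeff]
    simp
  have hu1 : IsUnit ((1 - X) * (1 + X^(m+1)) : PowerSeries ℤ_[m+1]) := by
    rw [PowerSeries.isUnit_iff_constantCoeff]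
    simp [zero_pow (Nat.succ_ne_zero m)]
  have hu2 : IsUnit (((1 + X) ^ 2 : PowerSeries ℤ_[m+1])) := by
    rw [PowerSeries.isUnit_iff_constantCoeff]
    simp
  have huΔ : IsUnit (((1-X)*(1+X^(m+1)) : PowerSeries ℤ_[m+1]) * (1+X)^(2*m)) :=
    hu1.mul (hu3.pow _)
  -- compute ρ (NN (m+1))
  have hρN : ρ (Stmt14.NN (m+1)) = (1+X)^(2*m+1) * (1 - X^(m+1))
      - (1-X)*(1+X^(m+1)) * ∑ k ∈ Finset.range (m+1),
          (Nat.choose (2*k) k : ℤ_[m+1]) • ((X:PowerSeries ℤ_[m+1])^k * (1+X)^(2*(m-k))) := by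
    have h1 : Stmt14.NN (m+1) = (1 + Polynomial.X)^(2*m+1) * (1 - Polynomial.X^(m+1))
        - (1 - Polynomial.X) * (1 + Polynomial.X^(m+1)) * Stmt14.TT (m+1) := by
      unfold Stmt14.NN Stmt14.PP Stmt14.QQ
      rw [show 2*(m+1)-1 = 2*m+1 from by omega]
    rw [h1, map_sub, map_mul, map_mul]
    simp only [map_pow, map_sub, map_add, map_one, hρX]
    congr 1
    congr 1
    · simp only [map_mul, map_pow, map_sub, map_add, map_one, hρX]
    unfold Stmt14.TT
    rw [map_sum]
    apply Finset.sum_congr rfl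
    intro k hk
    rw [map_mul, map_mul, map_pow, map_pow, map_add, map_one, hρX, map_natCast]
    rw [show m+1-1-k = m-k from by omega]
    rw [PowerSeries.smul_eq_C_mul, Nat.centralBinom_eq_two_mul_choose,
      ← map_natCast (PowerSeries.C (R := ℤ_[m+1])) ((2*k).choose k)]
    ring
  -- key identity
  have hkey : ((1 + X) * (1 - X ^ (m+1)) *
            Ring.inverse ((1 - X) * (1 + (X : PowerSeries ℤ_[m+1]) ^ (m+1)))
          - ∑ k ∈ Finset.range (m+1),
              (Nat.choose (2 * k) k : ℤ_[m+1]) •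
                (X * Ring.inverse ((1 + (X : PowerSeries ℤ_[m+1])) ^ 2)) ^ k)
        * (((1-X)*(1+X^(m+1))) * (1+X)^(2*m))
      = ρ (Stmt14.NN (m+1)) := by
    rw [sub_mul, Finset.sum_mul]
    have t1 : (1 + X) * (1 - X^(m+1)) * Ring.inverse ((1-X)*(1+(X:PowerSeries ℤ_[m+1])^(m+1)))
        * (((1-X)*(1+X^(m+1))) * (1+X)^(2*m))
        = (1+X)^(2*m+1) * (1 - X^(m+1)) := by
      linear_combination ((1+X:PowerSeries ℤ_[m+1]) * (1-X^(m+1)) * (1+X)^(2*m))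
        * Ring.inverse_mul_cancel _ hu1
    have t2 : ∀ k ∈ Finset.range (m+1),
        ((Nat.choose (2*k) k : ℤ_[m+1]) • ((X:PowerSeries ℤ_[m+1])
            * Ring.inverse ((1+X)^2))^k)
          * (((1-X)*(1+X^(m+1))) * (1+X)^(2*m))
        = (1-X)*(1+X^(m+1)) * ((Nat.choose (2*k) k : ℤ_[m+1])
            • ((X:PowerSeries ℤ_[m+1])^k * (1+X)^(2*(m-k)))) := by
      intro k hk
      have hkm : k ≤ m := by have := Finset.mem_range.mp hk; omega
      have h2k : Ring.inverse ((1+X:PowerSeries ℤ_[m+1])^2)^k * (1+X)^(2*k) = 1 := by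
        rw [show (1+X:PowerSeries ℤ_[m+1])^(2*k) = ((1+X)^2)^k from (pow_mul _ 2 k),
          ← mul_pow, Ring.inverse_mul_cancel _ hu2, one_pow]
      rw [smul_mul_assoc, mul_smul_comm]
      congr 1
      rw [show 2*m = 2*k + 2*(m-k) from by omega]
      linear_combination ((1-X:PowerSeries ℤ_[m+1])*(1+X^(m+1)) * X^k * (1+X)^(2*(m-k))) * h2k
    rw [Finset.sum_congr rfl t2, t1, hρN, ← Finset.mul_sum]
  have hfinal : ((1 + X) * (1 - X ^ (m+1)) *
            Ring.inverse ((1 - X) * (1 + (X : PowerSeries ℤ_[m+1]) ^ (m+1)))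
          - ∑ k ∈ Finset.range (m+1),
              (Nat.choose (2 * k) k : ℤ_[m+1]) •
                (X * Ring.inverse ((1 + (X : PowerSeries ℤ_[m+1])) ^ 2)) ^ k)
      = ρ (Stmt14.NN (m+1)) * Ring.inverse (((1-X)*(1+X^(m+1))) * (1+X)^(2*m)) := by
    rw [← hkey]
    conv_rhs => rw [mul_assoc, Ring.mul_inverse_cancel _ huΔ, mul_one]
  rw [hfinal, PowerSeries.coeff_mul]
  apply Finset.dvd_sum
  intro ij _
  apply dvd_mul_of_dvd_left
  have hco : (PowerSeries.coeff (R := ℤ_[m+1]) ij.1) (ρ (Stmt14.NN (m+1)))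
      = (((Stmt14.NN (m+1)).coeff ij.1 : ℤ) : ℤ_[m+1]) := by
    simp [hρ, Polynomial.coeToPowerSeries.ringHom_apply, Polynomial.coeff_coe,
      Polynomial.coeff_map]
  rw [hco]
  have h11 := map_dvd (Int.castRingHom ℤ_[m+1]) (hdvd ij.1)
  simp only [eq_intCast] at h11
  push_cast at h11
  exact_mod_cast h11
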